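/- Let (Y, d) be a metric space, c, c': ℝ → Y isometric embeddings such that the map (t, s) ↦ d(c(t), c'(s)) is proper (preimages of compacts are compact). Then the Hausdorff distance between c(ℝ) and c'(ℝ) is infinite: for every M > 0 there exists t ∈ ℝ with d(c(t), c'(ℝ)) > M. -/
import Mathlib


open Set Metric

/-- Corollary 3.5: if the joint distance function of two geodesic lines is proper, then
their Hausdorff distance is infinite: there are points of `c` arbitrarily far from `c'`. -/
theorem hausdorff_distance_infinite_of_proper {Y : Type*} [MetricSpace Y]
    (c c' : ℝ → Y) (hc : Isometry c) (hc' : Isometry c')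
    (hproper : ∀ K : Set ℝ, IsCompact K →
      IsCompact {p : ℝ × ℝ | dist (c p.1) (c' p.2) ∈ K}) :
    ∀ M > (0 : ℝ), ∃ t : ℝ, M < Metric.infDist (c t) (Set.range c') := by
  by_contra h
  push_neg at h
  obtain ⟨M, hM, hle⟩ := h
  have hK : IsCompact {p : ℝ × ℝ | dist (c p.1) (c' p.2) ∈ Icc (0 : ℝ) (M + 1)} :=
    hproper _ isCompact_Icc
  have hproj : IsCompact (Prod.fst '' {p : ℝ × ℝ | dist (c p.1) (c' p.2) ∈ Icc (0 : ℝ) (M + 1)}) :=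
    hK.image continuous_fst
  have huniv : Prod.fst '' {p : ℝ × ℝ | dist (c p.1) (c' p.2) ∈ Icc (0 : ℝ) (M + 1)} = univ := by
    ext t
    simp only [mem_image, mem_setOf_eq, mem_univ, iff_true]
    have hlt : Metric.infDist (c t) (Set.range c') < M + 1 :=
      lt_of_le_of_lt (hle t) (by linarith)
    obtain ⟨y, hy, hdy⟩ := (Metric.infDist_lt_iff ⟨c' 0, mem_range_self 0⟩).mp hlt
    obtain ⟨s, rfl⟩ := hy
    exact ⟨(t, s), ⟨dist_nonneg, hdy.le⟩, rfl⟩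
  rw [huniv] at hproj
  exact noncompact_univ ℝ hproj
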